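/- Let b* ∈ ℂ^{2N+1} be the 3-mode minimizer with b*_{-1} = b*_1 = √(3m/11), b*_0 = √(5m/11), zeros elsewhere. Then the gradient of H at b* satisfies ∇H(b*) = −(14m/11) b*, i.e., b* is an eigenvector of the gradient map with eigenvalue −14m/11. Moreover, for any η ∈ ℂ^{2N+1} with |b* + η|² = m, one has ⟨b*, η + conj(η)⟩ + |η|² = 0 and Re(∇H(b*)·η) = (7m/11)|η|². -/

import Mathlib

/-- The 3-mode minimizer of mass `m` centered at site `0`:
`b₋₁ = b₁ = √(3m/11)`, `b₀ = √(5m/11)`, zeros elsewhere. -/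
noncomputable def bstar (m : ℝ) : ℤ → ℂ := fun j =>
  if j = -1 ∨ j = 1 then ((Real.sqrt (3 * m / 11) : ℝ) : ℂ)
  else if j = 0 then ((Real.sqrt (5 * m / 11) : ℝ) : ℂ)
  else 0

/-- The gradient of `H` (with respect to the real inner product
`⟨u,v⟩ = Re Σ u_j conj(v_j)` on `ℂ^{2N+1} ≅ ℝ^{4N+2}`, i.e. `2 ∂H/∂conj(b_j)`):
`(∇H(b))_j = 2(|b_j|² b_j − 2 conj(b_j) b_{j-1}² − 2 b_{j+1}² conj(b_j))`. -/
noncomputable def gradH (b : ℤ → ℂ) (j : ℤ) : ℂ :=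
  2 * (((‖b j‖ : ℝ) : ℂ) ^ 2 * b j
    - 2 * (starRingEnd ℂ) (b j) * (b (j - 1)) ^ 2
    - 2 * (b (j + 1)) ^ 2 * (starRingEnd ℂ) (b j))

lemma part1 (m : ℝ) (hm : 0 < m) :
    ∀ j : ℤ, gradH (bstar m) j = ((-(14 * m / 11) : ℝ) : ℂ) * bstar m j := by
  intro j
  have h3' : ((Real.sqrt (3 * m / 11) : ℝ) : ℂ) ^ 2 = 3 * (m : ℂ) / 11 := by
    rw [← Complex.ofReal_pow, Real.sq_sqrt (by linarith)]; push_cast; ring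
  have h5' : ((Real.sqrt (5 * m / 11) : ℝ) : ℂ) ^ 2 = 5 * (m : ℂ) / 11 := by
    rw [← Complex.ofReal_pow, Real.sq_sqrt (by linarith)]; push_cast; ring
  have ha3 : |Real.sqrt (3 * m / 11)| = Real.sqrt (3 * m / 11) :=
    abs_of_nonneg (Real.sqrt_nonneg _)
  have ha5 : |Real.sqrt (5 * m / 11)| = Real.sqrt (5 * m / 11) :=
    abs_of_nonneg (Real.sqrt_nonneg _)
  have em2 : bstar m (-2) = 0 := by unfold bstar; norm_num
  have em1 : bstar m (-1) = ((Real.sqrt (3 * m / 11) : ℝ) : ℂ) := by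
    unfold bstar; norm_num
  have e0 : bstar m 0 = ((Real.sqrt (5 * m / 11) : ℝ) : ℂ) := by
    unfold bstar; norm_num
  have e1 : bstar m 1 = ((Real.sqrt (3 * m / 11) : ℝ) : ℂ) := by
    unfold bstar; norm_num
  have e2 : bstar m 2 = 0 := by unfold bstar; norm_num
  by_cases h1 : j = -1
  · subst h1
    rw [gradH, show (-1 : ℤ) - 1 = -2 from rfl, show (-1 : ℤ) + 1 = 0 from rfl,
      em1, em2, e0, Complex.conj_ofReal, Complex.norm_real, Real.norm_eq_abs, ha3]
    push_cast
    linear_combination (2 * ((Real.sqrt (3 * m / 11) : ℝ) : ℂ)) * h3'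
      - (4 * ((Real.sqrt (3 * m / 11) : ℝ) : ℂ)) * h5'
  · by_cases h0 : j = 0
    · subst h0
      rw [gradH, show (0 : ℤ) - 1 = -1 from rfl, show (0 : ℤ) + 1 = 1 from rfl,
        em1, e0, e1, Complex.conj_ofReal, Complex.norm_real, Real.norm_eq_abs, ha5]
      push_cast
      linear_combination (2 * ((Real.sqrt (5 * m / 11) : ℝ) : ℂ)) * h5'
        - (8 * ((Real.sqrt (5 * m / 11) : ℝ) : ℂ)) * h3'
    · by_cases h2 : j = 1
      · subst h2
        rw [gradH, show (1 : ℤ) - 1 = 0 from rfl, show (1 : ℤ) + 1 = 2 from rfl,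
          e0, e1, e2, Complex.conj_ofReal, Complex.norm_real, Real.norm_eq_abs, ha3]
        push_cast
        linear_combination (2 * ((Real.sqrt (3 * m / 11) : ℝ) : ℂ)) * h3'
          - (4 * ((Real.sqrt (3 * m / 11) : ℝ) : ℂ)) * h5'
      · have hbj : bstar m j = 0 := by unfold bstar; simp [h0, h1, h2]
        simp [gradH, hbj]

lemma expand_abs (b η : ℂ) (hb : b.im = 0) :
    (‖b + η‖) ^ 2 = (‖b‖) ^ 2
      + (b * (starRingEnd ℂ) (η + (starRingEnd ℂ) η)).re + (‖η‖) ^ 2 := by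
  simp only [Complex.sq_norm, Complex.normSq_apply, Complex.mul_re, Complex.add_re,
    Complex.add_im, Complex.conj_re, Complex.conj_im, hb]
  ring

/-- At the 3-mode minimizer, `∇H(b*) = −(14m/11) b*`; moreover, for any perturbation
`η` keeping the mass equal to `m`, `⟨b*, η + conj η⟩ + |η|² = 0` and
`Re(∇H(b*)·η) = (7m/11)|η|²`. -/
theorem gradH_at_minimizer (N : ℕ) (hN : 2 ≤ N) (m : ℝ) (hm : 0 < m) :
    (∀ j : ℤ, gradH (bstar m) j = ((-(14 * m / 11) : ℝ) : ℂ) * bstar m j) ∧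
    (∀ η : ℤ → ℂ, (∀ j : ℤ, j ∉ Finset.Icc (-(N : ℤ)) (N : ℤ) → η j = 0) →
      (∑ j ∈ Finset.Icc (-(N : ℤ)) (N : ℤ), (‖bstar m j + η j‖) ^ 2) = m →
      ((∑ j ∈ Finset.Icc (-(N : ℤ)) (N : ℤ),
          bstar m j * (starRingEnd ℂ) (η j + (starRingEnd ℂ) (η j))).re
        + ∑ j ∈ Finset.Icc (-(N : ℤ)) (N : ℤ), (‖η j‖) ^ 2 = 0) ∧
      ((∑ j ∈ Finset.Icc (-(N : ℤ)) (N : ℤ), gradH (bstar m) j * η j).re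
        = (7 * m / 11) * ∑ j ∈ Finset.Icc (-(N : ℤ)) (N : ℤ), (‖η j‖) ^ 2)) := by
  refine ⟨part1 m hm, ?_⟩
  intro η hsupp hmass
  set S := Finset.Icc (-(N : ℤ)) (N : ℤ) with hS
  have him : ∀ j, (bstar m j).im = 0 := by
    intro j; unfold bstar; split_ifs <;> simp
  have ha3 : |Real.sqrt (3 * m / 11)| = Real.sqrt (3 * m / 11) :=
    abs_of_nonneg (Real.sqrt_nonneg _)
  have ha5 : |Real.sqrt (5 * m / 11)| = Real.sqrt (5 * m / 11) :=
    abs_of_nonneg (Real.sqrt_nonneg _)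
  have em1 : bstar m (-1) = ((Real.sqrt (3 * m / 11) : ℝ) : ℂ) := by
    unfold bstar; norm_num
  have e0 : bstar m 0 = ((Real.sqrt (5 * m / 11) : ℝ) : ℂ) := by
    unfold bstar; norm_num
  have e1 : bstar m 1 = ((Real.sqrt (3 * m / 11) : ℝ) : ℂ) := by
    unfold bstar; norm_num
  have v3 : (‖bstar m (-1)‖) ^ 2 = 3 * m / 11 := by
    rw [em1, Complex.norm_real, Real.norm_eq_abs, ha3, Real.sq_sqrt (by linarith)]
  have v3' : (‖bstar m 1‖) ^ 2 = 3 * m / 11 := by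
    rw [e1, Complex.norm_real, Real.norm_eq_abs, ha3, Real.sq_sqrt (by linarith)]
  have v5 : (‖bstar m 0‖) ^ 2 = 5 * m / 11 := by
    rw [e0, Complex.norm_real, Real.norm_eq_abs, ha5, Real.sq_sqrt (by linarith)]
  have hsub : ({-1, 0, 1} : Finset ℤ) ⊆ S := by
    intro x hx
    simp only [Finset.mem_insert, Finset.mem_singleton] at hx
    simp only [hS, Finset.mem_Icc]
    rcases hx with h | h | h <;> subst h <;> omega
  have hbmass : ∑ j ∈ S, (‖bstar m j‖) ^ 2 = m := by
    rw [← Finset.sum_subset hsub (by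
      intro x _ hx
      simp only [Finset.mem_insert, Finset.mem_singleton, not_or] at hx
      have : bstar m x = 0 := by unfold bstar; simp [hx.1, hx.2.1, hx.2.2]
      simp [this])]
    rw [show ({-1, 0, 1} : Finset ℤ) = insert (-1) (insert 0 {1}) from rfl,
      Finset.sum_insert (by decide), Finset.sum_insert (by decide),
      Finset.sum_singleton, v3, v5, v3']
    ring
  have hexp : ∑ j ∈ S, (‖bstar m j + η j‖) ^ 2
      = ∑ j ∈ S, (‖bstar m j‖) ^ 2
        + ∑ j ∈ S, (bstar m j * (starRingEnd ℂ) (η j + (starRingEnd ℂ) (η j))).re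
        + ∑ j ∈ S, (‖η j‖) ^ 2 := by
    rw [← Finset.sum_add_distrib, ← Finset.sum_add_distrib]
    exact Finset.sum_congr rfl fun j _ => expand_abs _ _ (him j)
  have hre : (∑ j ∈ S, bstar m j * (starRingEnd ℂ) (η j + (starRingEnd ℂ) (η j))).re
      = ∑ j ∈ S, (bstar m j * (starRingEnd ℂ) (η j + (starRingEnd ℂ) (η j))).re :=
    Complex.re_sum S _
  have h1 : (∑ j ∈ S, bstar m j * (starRingEnd ℂ) (η j + (starRingEnd ℂ) (η j))).re
      + ∑ j ∈ S, (‖η j‖) ^ 2 = 0 := by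
    rw [hre]
    rw [hmass, hbmass] at hexp
    linarith
  refine ⟨h1, ?_⟩
  -- second identity
  have hT : ∑ j ∈ S, (bstar m j * (starRingEnd ℂ) (η j + (starRingEnd ℂ) (η j))).re
      = 2 * ∑ j ∈ S, (bstar m j).re * (η j).re := by
    rw [Finset.mul_sum]
    refine Finset.sum_congr rfl fun j _ => ?_
    simp only [Complex.mul_re, Complex.add_re, Complex.add_im, Complex.conj_re,
      Complex.conj_im, him j]
    ring
  have hgrad : (∑ j ∈ S, gradH (bstar m) j * η j).re
      = -(14 * m / 11) * ∑ j ∈ S, (bstar m j).re * (η j).re := by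
    rw [Complex.re_sum, Finset.mul_sum]
    refine Finset.sum_congr rfl fun j _ => ?_
    rw [part1 m hm j]
    simp only [Complex.mul_re, Complex.mul_im, Complex.ofReal_re, Complex.ofReal_im, him j]
    ring
  rw [hgrad]
  rw [hre, hT] at h1
  linear_combination (-(7 * m / 11)) * h1
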